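/- arXiv:2507.16631 — 4 statements merged into one kernel-verified Lean document; each statement's English description precedes it below -/
import Mathlib

section
/- In the DG scheme for pure aggregation with symmetric triangulation and D₃-symmetric quadrature, the discrete mass M_h(t) = ∫₀^{v_max} v n_h(v,t) dv is constant in time: taking the test function φ(v) = v and summing over all cells, the birth and death quadrature sums cancel exactly. -/
open MeasureTheory Set

open Classical

/-- Discrete mass conservation for the conservative DG aggregation scheme: with a
swap-symmetric common refinement `𝒯` of the birth regions `{A_i}` and death regions
`{B_i}`, swap-equivariant additive quadrature functionals `Q`, and a symmetric kernel
`β`, the discrete mass `M_h(t) = ∫₀^{v_max} v n_h(v,t) dv` is constant in time. -/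
theorem DG_aggregation_mass_conservation
    (L k : ℕ) (hL : 0 < L) (hk : 1 ≤ k) (vmax : ℝ) (g : ℕ → ℝ)
    (hg0 : g 0 = 0) (hgL : g L = vmax) (hmono : ∀ i < L, g i < g (i + 1))
    (β : ℝ → ℝ → ℝ) (hβsymm : ∀ u w : ℝ, β u w = β w u)
    (A B : ℕ → Set (ℝ × ℝ))
    (hA : ∀ i, A i = {q : ℝ × ℝ | 0 ≤ q.1 ∧ 0 ≤ q.2 ∧ g i ≤ q.1 + q.2 ∧ q.1 + q.2 ≤ g (i + 1)})
    (hB : ∀ i, B i = {q : ℝ × ℝ | 0 ≤ q.2 ∧ g i ≤ q.1 ∧ q.1 ≤ g (i + 1) ∧ q.1 + q.2 ≤ vmax})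
    (𝒯 : Finset (Set (ℝ × ℝ)))
    (hclosed : ∀ T ∈ 𝒯, Prod.swap '' T ∈ 𝒯)
    (hrefA : ∀ f : Set (ℝ × ℝ) → ℝ,
      (∑ i ∈ Finset.range L, ∑ T ∈ 𝒯.filter (fun T => T ⊆ A i), f T) = ∑ T ∈ 𝒯, f T)
    (hrefB : ∀ f : Set (ℝ × ℝ) → ℝ,
      (∑ i ∈ Finset.range L, ∑ T ∈ 𝒯.filter (fun T => T ⊆ B i), f T) = ∑ T ∈ 𝒯, f T)
    (Q : Set (ℝ × ℝ) → (ℝ × ℝ → ℝ) → ℝ)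
    (hQadd : ∀ T (f f' : ℝ × ℝ → ℝ), Q T (fun q => f q + f' q) = Q T f + Q T f')
    (hQswap : ∀ T (f : ℝ × ℝ → ℝ), Q (Prod.swap '' T) f = Q T (f ∘ Prod.swap))
    (nh : ℝ → ℝ → ℝ)
    (hscheme : ∀ t : ℝ, ∀ i ∈ Finset.range L, ∀ φ : Polynomial ℝ, φ.natDegree ≤ k →
      HasDerivAt (fun s => ∫ v in Set.Icc (g i) (g (i + 1)), nh v s * φ.eval v)
        ((1/2) * (∑ T ∈ 𝒯.filter (fun T => T ⊆ A i),
            Q T (fun q => φ.eval (q.1 + q.2) * β q.2 q.1 * nh q.2 t * nh q.1 t))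
          - ∑ T ∈ 𝒯.filter (fun T => T ⊆ B i),
            Q T (fun q => φ.eval q.1 * β q.1 q.2 * nh q.1 t * nh q.2 t)) t) :
    ∀ t₁ t₂ : ℝ,
      (∑ i ∈ Finset.range L, ∫ v in Set.Icc (g i) (g (i + 1)), v * nh v t₁)
        = ∑ i ∈ Finset.range L, ∫ v in Set.Icc (g i) (g (i + 1)), v * nh v t₂ := by

  intro t₁ t₂
  have hX : (Polynomial.X : Polynomial ℝ).natDegree ≤ k := by
    simpa [Polynomial.natDegree_X] using hk
  -- summing over swap is the identity on sums over 𝒯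
  have hswapsum : ∀ d : ℝ × ℝ → ℝ,
      (∑ T ∈ 𝒯, Q T d) = ∑ T ∈ 𝒯, Q T (d ∘ Prod.swap) := by
    intro d
    refine Finset.sum_nbij' (fun T => Prod.swap '' T) (fun T => Prod.swap '' T)
      ?_ ?_ ?_ ?_ ?_
    · intro T hT; exact hclosed T hT
    · intro T hT; exact hclosed T hT
    · intro T _; simp [Set.image_image]
    · intro T _; simp [Set.image_image]
    · intro T hT
      rw [hQswap]
      rfl
  -- the total derivative is zero
  have hderiv : ∀ t : ℝ, HasDerivAt
      (fun s => ∑ i ∈ Finset.range L,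
        ∫ v in Set.Icc (g i) (g (i + 1)), nh v s * (Polynomial.X : Polynomial ℝ).eval v)
      0 t := by
    intro t
    have h := HasDerivAt.sum (fun i hi => hscheme t i hi Polynomial.X hX)
    have hzero : (∑ i ∈ Finset.range L,
        ((1/2) * (∑ T ∈ 𝒯.filter (fun T => T ⊆ A i),
            Q T (fun q => (Polynomial.X : Polynomial ℝ).eval (q.1 + q.2) * β q.2 q.1 * nh q.2 t * nh q.1 t))
          - ∑ T ∈ 𝒯.filter (fun T => T ⊆ B i),
            Q T (fun q => (Polynomial.X : Polynomial ℝ).eval q.1 * β q.1 q.2 * nh q.1 t * nh q.2 t))) = 0 := by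
      rw [Finset.sum_sub_distrib, ← Finset.mul_sum]
      rw [hrefA (fun T => Q T (fun q => (Polynomial.X : Polynomial ℝ).eval (q.1 + q.2) * β q.2 q.1 * nh q.2 t * nh q.1 t))]
      rw [hrefB (fun T => Q T (fun q => (Polynomial.X : Polynomial ℝ).eval q.1 * β q.1 q.2 * nh q.1 t * nh q.2 t))]
      have hsplit : ∀ T, Q T (fun q => (Polynomial.X : Polynomial ℝ).eval (q.1 + q.2) * β q.2 q.1 * nh q.2 t * nh q.1 t)
          = Q T (fun q => q.1 * β q.1 q.2 * nh q.1 t * nh q.2 t)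
            + Q T (fun q => q.2 * β q.2 q.1 * nh q.2 t * nh q.1 t) := by
        intro T
        rw [← hQadd]
        congr 1
        funext q
        simp only [Polynomial.eval_X]
        rw [hβsymm q.2 q.1]
        ring
      simp only [hsplit]
      rw [Finset.sum_add_distrib]
      have h2 : (∑ T ∈ 𝒯, Q T (fun q => q.2 * β q.2 q.1 * nh q.2 t * nh q.1 t))
          = ∑ T ∈ 𝒯, Q T (fun q => (Polynomial.X : Polynomial ℝ).eval q.1 * β q.1 q.2 * nh q.1 t * nh q.2 t) := by
        rw [hswapsum (fun q => q.2 * β q.2 q.1 * nh q.2 t * nh q.1 t)]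
        congr 1
        funext T
        congr 1
        funext q
        simp [Function.comp, Prod.swap]
      have h1 : (∑ T ∈ 𝒯, Q T (fun q => q.1 * β q.1 q.2 * nh q.1 t * nh q.2 t))
          = ∑ T ∈ 𝒯, Q T (fun q => (Polynomial.X : Polynomial ℝ).eval q.1 * β q.1 q.2 * nh q.1 t * nh q.2 t) := by
        congr 1
        funext T
        congr 1
        funext q
        simp
      rw [h1, h2]
      ring
    rw [hzero] at h
    rw [Finset.sum_fn] at h
    exact h
  have hconst : ∀ s₁ s₂ : ℝ,
      (∑ i ∈ Finset.range L,
        ∫ v in Set.Icc (g i) (g (i + 1)), nh v s₁ * (Polynomial.X : Polynomial ℝ).eval v)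
      = ∑ i ∈ Finset.range L,
        ∫ v in Set.Icc (g i) (g (i + 1)), nh v s₂ * (Polynomial.X : Polynomial ℝ).eval v := by
    intro s₁ s₂
    exact is_const_of_deriv_eq_zero (fun x => (hderiv x).differentiableAt)
      (fun x => (hderiv x).deriv) s₁ s₂
  have hrw : ∀ s : ℝ, (∑ i ∈ Finset.range L, ∫ v in Set.Icc (g i) (g (i + 1)), v * nh v s)
      = ∑ i ∈ Finset.range L,
        ∫ v in Set.Icc (g i) (g (i + 1)), nh v s * (Polynomial.X : Polynomial ℝ).eval v := by
    intro s
    refine Finset.sum_congr rfl (fun i _ => ?_)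
    congr 1
    funext v
    simp [mul_comm]
  rw [hrw t₁, hrw t₂]
  exact hconst t₁ t₂
end

section
/- In the DG scheme for pure breakage where the death term is discretized via the same common refinement E⁰ and quadrature as the birth term, the discrete mass M_h(t) = ∫₀^{v_max} v n_h(v,t) dv is constant in time. -/
open MeasureTheory Set

open Classical

/-- Discrete mass conservation for the conservative DG breakage scheme: with a common
refinement `ℰ` of the birth strips `{C_i}` and death strips `{D_i}` of the breakage
region, a single quadrature rule per element, the discrete mass
`M_h(t) = ∫₀^{v_max} v n_h(v,t) dv` is constant in time. -/
theorem DG_breakage_mass_conservation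
    (L k : ℕ) (hL : 0 < L) (hk : 1 ≤ k) (vmax : ℝ) (g : ℕ → ℝ)
    (hg0 : g 0 = 0) (hgL : g L = vmax) (hmono : ∀ i < L, g i < g (i + 1))
    (p : ℝ → ℝ → ℝ) (γ : ℝ → ℝ)
    (C D : ℕ → Set (ℝ × ℝ))
    (hC : ∀ i, C i = {q : ℝ × ℝ | g i ≤ q.1 ∧ q.1 ≤ g (i + 1) ∧ q.1 ≤ q.2 ∧ q.2 ≤ vmax})
    (hD : ∀ i, D i = {q : ℝ × ℝ | g i ≤ q.2 ∧ q.2 ≤ g (i + 1) ∧ 0 ≤ q.1 ∧ q.1 ≤ q.2})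
    (ℰ : Finset (Set (ℝ × ℝ)))
    (hrefC : ∀ f : Set (ℝ × ℝ) → ℝ,
      (∑ i ∈ Finset.range L, ∑ E ∈ ℰ.filter (fun E => E ⊆ C i), f E) = ∑ E ∈ ℰ, f E)
    (hrefD : ∀ f : Set (ℝ × ℝ) → ℝ,
      (∑ i ∈ Finset.range L, ∑ E ∈ ℰ.filter (fun E => E ⊆ D i), f E) = ∑ E ∈ ℰ, f E)
    (Q : Set (ℝ × ℝ) → (ℝ × ℝ → ℝ) → ℝ)
    (QI : ℕ → (ℝ → ℝ) → ℝ)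
    (hQIzero : ∀ i (f : ℝ → ℝ), (∀ v, f v = 0) → QI i f = 0)
    (nh : ℝ → ℝ → ℝ)
    (hscheme : ∀ t : ℝ, ∀ i ∈ Finset.range L, ∀ φ : Polynomial ℝ, φ.natDegree ≤ k →
      HasDerivAt (fun s => ∫ v in Set.Icc (g i) (g (i + 1)), nh v s * φ.eval v)
        ((∑ E ∈ ℰ.filter (fun E => E ⊆ C i),
            Q E (fun q => φ.eval q.1 * p q.1 q.2 * γ q.2 * nh q.2 t))
          - (∑ E ∈ ℰ.filter (fun E => E ⊆ D i),
            Q E (fun q => q.1 * p q.1 q.2 * γ q.2 * nh q.2 t))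
          - QI i (fun v => (φ.eval v - v) * γ v * nh v t)) t) :
    ∀ t₁ t₂ : ℝ,
      (∑ i ∈ Finset.range L, ∫ v in Set.Icc (g i) (g (i + 1)), v * nh v t₁)
        = ∑ i ∈ Finset.range L, ∫ v in Set.Icc (g i) (g (i + 1)), v * nh v t₂ := by

  -- Take the test function φ(v) = v; then the scheme gives zero total derivative.
  have hX : (Polynomial.X : Polynomial ℝ).natDegree ≤ k := by
    simpa [Polynomial.natDegree_X] using hk
  have hderiv : ∀ t : ℝ,
      HasDerivAt (fun s => ∑ i ∈ Finset.range L,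
        ∫ v in Set.Icc (g i) (g (i + 1)), v * nh v s) 0 t := by
    intro t
    have h1 : ∀ i ∈ Finset.range L,
        HasDerivAt (fun s => ∫ v in Set.Icc (g i) (g (i + 1)), v * nh v s)
          ((∑ E ∈ ℰ.filter (fun E => E ⊆ C i),
              Q E (fun q => q.1 * p q.1 q.2 * γ q.2 * nh q.2 t))
            - (∑ E ∈ ℰ.filter (fun E => E ⊆ D i),
              Q E (fun q => q.1 * p q.1 q.2 * γ q.2 * nh q.2 t))) t := by
      intro i hi
      have h := hscheme t i hi Polynomial.X hX
      simp only [Polynomial.eval_X] at h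
      have hz : QI i (fun v => (v - v) * γ v * nh v t) = 0 :=
        hQIzero i _ (by intro v; ring)
      rw [hz, sub_zero] at h
      simpa [mul_comm] using h
    have h2 := HasDerivAt.fun_sum h1
    have hsum : (∑ i ∈ Finset.range L,
        ((∑ E ∈ ℰ.filter (fun E => E ⊆ C i),
            Q E (fun q => q.1 * p q.1 q.2 * γ q.2 * nh q.2 t))
          - (∑ E ∈ ℰ.filter (fun E => E ⊆ D i),
            Q E (fun q => q.1 * p q.1 q.2 * γ q.2 * nh q.2 t)))) = 0 := by
      rw [Finset.sum_sub_distrib,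
        hrefC (fun E => Q E (fun q => q.1 * p q.1 q.2 * γ q.2 * nh q.2 t)),
        hrefD (fun E => Q E (fun q => q.1 * p q.1 q.2 * γ q.2 * nh q.2 t)), sub_self]
    rw [hsum] at h2
    exact h2
  intro t₁ t₂
  have hconst := is_const_of_deriv_eq_zero
    (f := fun s => ∑ i ∈ Finset.range L, ∫ v in Set.Icc (g i) (g (i + 1)), v * nh v s)
    (fun x => (hderiv x).differentiableAt)
    (fun x => (hderiv x).deriv)
  exact hconst t₁ t₂
end

section
/- Forward-Euler positivity of moments for growth with upwind flux: suppose n_h^m ≥ 0, G ≥ 0, S ≥ 0, and n_h^{m+1} is produced by one forward Euler step of the upwind DG scheme for ∂ₜn + ∂ᵥ(G n) = S using Gauss–Lobatto quadrature with weights ϖ_α^G > 0. If Δt ≤ (ϖ_{N_G}^G / ‖G‖_{L^∞}) Δv, then ∫_{I_i} v^s n_h^{m+1}(v) dv ≥ 0 for every cell I_i and every integer 0 ≤ s ≤ k. -/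
open MeasureTheory Set

/-- Forward-Euler positivity of moments for the upwind DG growth–nucleation scheme
with Gauss–Lobatto quadrature: if `n_h^m ≥ 0`, `G ≥ 0`, `S ≥ 0`, and
`Δt ≤ (ϖ_{N_G} / ‖G‖_∞) Δv`, then every moment `∫_{I_i} v^s n_h^{m+1} dv`,
`0 ≤ s ≤ k`, is nonnegative on every cell. -/
theorem DG_growth_forward_Euler_moment_positivity
    (L k NG : ℕ) (hL : 0 < L) (hk : 1 ≤ k) (hNG : k + 2 ≤ NG)
    (vmax : ℝ) (hvmax : 0 < vmax) (g : ℕ → ℝ)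
    (hg0 : g 0 = 0) (hgL : g L = vmax) (hmono : ∀ i < L, g i < g (i + 1))
    (G S : ℝ → ℝ)
    (hGpos : ∀ v ∈ Set.Icc (0:ℝ) vmax, 0 ≤ G v)
    (hSpos : ∀ v ∈ Set.Icc (0:ℝ) vmax, 0 ≤ S v)
    (ω : ℕ → ℝ) (hω : ∀ α < NG, 0 < ω α)
    (node : ℕ → ℕ → ℝ)
    (hnode : ∀ i < L, ∀ α < NG, node i α ∈ Set.Icc (g i) (g (i + 1)))
    (hnodeL : ∀ i < L, node i 0 = g i)
    (hnodeR : ∀ i < L, node i (NG - 1) = g (i + 1))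
    (QGL : ℕ → (ℝ → ℝ) → ℝ)
    (hQGL : ∀ i (f : ℝ → ℝ),
      QGL i f = (g (i + 1) - g i) * ∑ α ∈ Finset.range NG, ω α * f (node i α))
    (hexact : ∀ i < L, ∀ P : Polynomial ℝ, P.natDegree ≤ 2 * NG - 3 →
      (∫ v in Set.Icc (g i) (g (i + 1)), P.eval v) = QGL i (fun v => P.eval v))
    (nh0 nh1 : ℕ → ℝ → ℝ)
    (hpoly0 : ∀ i < L, ∃ P : Polynomial ℝ, P.natDegree ≤ k ∧ ∀ v, nh0 i v = P.eval v)
    (hnh0 : ∀ i < L, ∀ v ∈ Set.Icc (g i) (g (i + 1)), 0 ≤ nh0 i v)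
    (bc : ℝ) (hbc : 0 ≤ bc)
    (Δt Δv CG : ℝ) (hΔt : 0 < Δt) (hCG : 0 < CG)
    (hGbound : ∀ v ∈ Set.Icc (0:ℝ) vmax, G v ≤ CG)
    (hΔv : 0 < Δv) (hΔv' : ∀ i < L, Δv ≤ g (i + 1) - g i)
    (hcfl : Δt ≤ ω (NG - 1) / CG * Δv)
    (hupdate : ∀ i < L, ∀ s ≤ k,
      (∫ v in Set.Icc (g i) (g (i + 1)), v ^ s * nh1 i v)
        = QGL i (fun v => v ^ s * nh0 i v)
          + Δt * (QGL i (fun v => (s : ℝ) * v ^ (s - 1) * G v * nh0 i v)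
              + G (g i) * (if i = 0 then bc else nh0 (i - 1) (g i)) * (g i) ^ s
              - G (g (i + 1)) * nh0 i (g (i + 1)) * (g (i + 1)) ^ s
              + QGL i (fun v => S v * v ^ s))) :
    ∀ i < L, ∀ s ≤ k, 0 ≤ ∫ v in Set.Icc (g i) (g (i + 1)), v ^ s * nh1 i v := by
  -- monotonicity of g
  have hmono' : ∀ m n, m ≤ n → n ≤ L → g m ≤ g n := by
    intro m n hmn hnL
    induction n with
    | zero =>
      have : m = 0 := Nat.le_zero.mp hmn
      simp [this]
    | succ n ih =>
      rcases Nat.lt_or_ge m (n + 1) with h | h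
      · have h1 : g m ≤ g n := ih (Nat.lt_succ_iff.mp h) (by omega)
        exact h1.trans (le_of_lt (hmono n (by omega)))
      · have : m = n + 1 := le_antisymm hmn h
        simp [this]
  have hg_nonneg : ∀ j, j ≤ L → 0 ≤ g j := fun j hj => hg0 ▸ hmono' 0 j (Nat.zero_le _) hj
  have hg_le : ∀ j, j ≤ L → g j ≤ vmax := fun j hj => hgL ▸ hmono' j L hj le_rfl
  intro i hi s hs
  rw [hupdate i hi s hs, hQGL, hQGL, hQGL]
  obtain ⟨M, hM⟩ : ∃ M, NG = M + 1 := ⟨NG - 1, by omega⟩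
  subst hM
  have hM1 : (M + 1 : ℕ) - 1 = M := rfl
  have hab : g i < g (i + 1) := hmono i hi
  have ha0 : 0 ≤ g i := hg_nonneg i hi.le
  have hbv : g (i + 1) ≤ vmax := hg_le (i + 1) hi
  have hnodemem : ∀ α < M + 1, node i α ∈ Set.Icc (0:ℝ) vmax := by
    intro α hα
    obtain ⟨h1, h2⟩ := hnode i hi α hα
    exact ⟨ha0.trans h1, h2.trans hbv⟩
  have hnodeRi : node i M = g (i + 1) := hnodeR i hi
  rw [Finset.sum_range_succ, Finset.sum_range_succ, Finset.sum_range_succ]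
  rw [hnodeRi]
  -- nonnegativity of sums up to M
  have hS1 : 0 ≤ ∑ α ∈ Finset.range M, ω α * ((node i α) ^ s * nh0 i (node i α)) := by
    refine Finset.sum_nonneg fun α hα => ?_
    have hα' : α < M + 1 := by
      have := Finset.mem_range.mp hα; omega
    have h0 := (hnodemem α hα').1
    exact mul_nonneg (le_of_lt (hω α hα'))
      (mul_nonneg (pow_nonneg h0 s) (hnh0 i hi _ (hnode i hi α hα')))
  have hS2 : 0 ≤ ∑ α ∈ Finset.range (M + 1),
      ω α * ((s : ℝ) * (node i α) ^ (s - 1) * G (node i α) * nh0 i (node i α)) := by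
    refine Finset.sum_nonneg fun α hα => ?_
    have hα' : α < M + 1 := Finset.mem_range.mp hα
    have h0 := (hnodemem α hα').1
    exact mul_nonneg (le_of_lt (hω α hα'))
      (mul_nonneg (mul_nonneg (mul_nonneg (Nat.cast_nonneg s) (pow_nonneg h0 _))
        (hGpos _ (hnodemem α hα'))) (hnh0 i hi _ (hnode i hi α hα')))
  have hS3 : 0 ≤ ∑ α ∈ Finset.range (M + 1),
      ω α * (S (node i α) * (node i α) ^ s) := by
    refine Finset.sum_nonneg fun α hα => ?_
    have hα' : α < M + 1 := Finset.mem_range.mp hα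
    have h0 := (hnodemem α hα').1
    exact mul_nonneg (le_of_lt (hω α hα'))
      (mul_nonneg (hSpos _ (hnodemem α hα')) (pow_nonneg h0 s))
  rw [Finset.sum_range_succ, hnodeRi] at hS2 hS3
  -- inflow nonneg
  have hamem : g i ∈ Set.Icc (0:ℝ) vmax := ⟨ha0, le_trans hab.le hbv⟩
  have hbmem : g (i + 1) ∈ Set.Icc (0:ℝ) vmax := ⟨ha0.trans hab.le, hbv⟩
  have hIn : 0 ≤ G (g i) * (if i = 0 then bc else nh0 (i - 1) (g i)) * (g i) ^ s := by
    refine mul_nonneg (mul_nonneg (hGpos _ hamem) ?_) (pow_nonneg ha0 s)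
    split
    · exact hbc
    · next h =>
      have hi1 : i - 1 < L := by omega
      have hieq : (i - 1) + 1 = i := by omega
      refine hnh0 (i - 1) hi1 (g i) ?_
      rw [hieq]
      exact ⟨(hmono (i - 1) hi1).le.trans_eq (by rw [hieq]), le_rfl⟩
  -- key CFL inequality
  have hωM : 0 < ω M := hω M (by omega)
  have hGb : G (g (i + 1)) ≤ CG := hGbound _ hbmem
  have hGb0 : 0 ≤ G (g (i + 1)) := hGpos _ hbmem
  have hΔvi : Δv ≤ g (i + 1) - g i := hΔv' i hi
  have hcfl' : Δt * G (g (i + 1)) ≤ (g (i + 1) - g i) * ω M := by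
    have h1 : Δt * G (g (i + 1)) ≤ Δt * CG := by
      exact mul_le_mul_of_nonneg_left hGb hΔt.le
    have h2 : Δt * CG ≤ ω M * Δv := by
      rw [hM1] at hcfl
      calc Δt * CG ≤ (ω M / CG * Δv) * CG := by
            exact mul_le_mul_of_nonneg_right hcfl hCG.le
        _ = ω M * Δv := by field_simp
    have h3 : ω M * Δv ≤ ω M * (g (i + 1) - g i) := by
      exact mul_le_mul_of_nonneg_left hΔvi hωM.le
    linarith
  have hX : 0 ≤ (g (i + 1)) ^ s * nh0 i (g (i + 1)) :=
    mul_nonneg (pow_nonneg (ha0.trans hab.le) s)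
      (hnh0 i hi _ ⟨hab.le, le_rfl⟩)
  have hkey : Δt * (G (g (i + 1)) * nh0 i (g (i + 1)) * (g (i + 1)) ^ s)
      ≤ (g (i + 1) - g i) * (ω M * ((g (i + 1)) ^ s * nh0 i (g (i + 1)))) := by
    have := mul_le_mul_of_nonneg_right hcfl' hX
    nlinarith [this]
  have hd : (0:ℝ) ≤ g (i + 1) - g i := by linarith
  nlinarith [mul_nonneg hd hS1, mul_nonneg (mul_nonneg hΔt.le hd) hS2,
    mul_nonneg hΔt.le hIn, mul_nonneg (mul_nonneg hΔt.le hd) hS3, hkey]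
end

section
/- Accuracy of the moment-conserving limiter: there is a constant C(k,s), depending only on the polynomial degree k and the moment index s (and the normalized node positions of the (k+1)-point Gauss–Legendre rule), such that for any cell I_i ⊂ (0,∞) and any n_h ∈ P^k(I_i) with ∫_{I_i} v^s n_h dv ≥ 0, the limited polynomial ñ_h = θ(n_h + m) satisfies ‖n_h − ñ_h‖_{L^∞(I_i)} ≤ C(k,s) · m, where m = −min_{I_i} n_h. -/
open MeasureTheory Set
open scoped ENNReal
set_option maxHeartbeats 1000000

lemma aux_int_pos (n : ℕ) (p : Polynomial ℝ) (hp : p ≠ 0)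
    (hnn : ∀ t ∈ Icc (0:ℝ) 1, 0 ≤ p.eval t) :
    0 < ∫ t in (0:ℝ)..1, t ^ n * p.eval t := by
  have hcont : Continuous fun t : ℝ => t ^ n * p.eval t :=
    (continuous_pow n).mul p.continuous
  rw [intervalIntegral.integral_pos_iff_support_of_nonneg_ae'
    ?_ (hcont.intervalIntegrable 0 1)]
  · refine ⟨one_pos, ?_⟩
    have hsub : Ioc (0:ℝ) 1 \ {t | p.IsRoot t} ⊆
        Function.support (fun t : ℝ => t ^ n * p.eval t) ∩ Ioc 0 1 := by
      intro t ht
      refine ⟨?_, ht.1⟩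
      have ht0 : (0:ℝ) < t := ht.1.1
      have hpe : p.eval t ≠ 0 := ht.2
      simp only [Function.mem_support]
      positivity
    calc (0:ℝ≥0∞) < volume (Ioc (0:ℝ) 1) := by simp
      _ = volume (Ioc (0:ℝ) 1 \ {t | p.IsRoot t}) :=
          (measure_diff_null ((Polynomial.finite_setOf_isRoot hp).measure_zero volume)).symm
      _ ≤ _ := measure_mono hsub
  · rw [uIoc_of_le (by norm_num : (0:ℝ) ≤ 1)]
    refine ae_restrict_of_forall_mem measurableSet_Ioc ?_
    intro t ht
    have := hnn t ⟨ht.1.le, ht.2⟩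
    have h0 : (0:ℝ) ≤ t := ht.1.le
    positivity

lemma aux_int_eval (s k : ℕ) (c : Fin (k+1) → ℝ) :
    ∫ t in (0:ℝ)..1, t ^ s * (∑ j : Fin (k+1), c j * t ^ (j:ℕ))
      = ∑ j : Fin (k+1), c j * (1 / ((s:ℝ) + j + 1)) := by
  have h1 : ∀ t : ℝ, t ^ s * (∑ j : Fin (k+1), c j * t ^ (j:ℕ))
      = ∑ j : Fin (k+1), c j * t ^ (s + (j:ℕ)) := by
    intro t
    rw [Finset.mul_sum]
    refine Finset.sum_congr rfl fun j _ => ?_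
    rw [pow_add]; ring
  simp_rw [h1]
  rw [intervalIntegral.integral_finset_sum (f := fun (j : Fin (k+1)) (t : ℝ) => c j * t ^ (s + (j:ℕ))) (fun j _ =>
    ((continuous_const.mul (continuous_pow _)).intervalIntegrable 0 1))]
  refine Finset.sum_congr rfl fun j _ => ?_
  rw [intervalIntegral.integral_const_mul, integral_pow]
  have h0 : (0:ℝ) ^ (s + (j:ℕ) + 1) = 0 := zero_pow (Nat.succ_ne_zero _)
  rw [h0]
  push_cast
  ring

lemma aux_stepA (k s : ℕ) : ∃ ε : ℝ, 0 < ε ∧ ∀ c : Fin (k+1) → ℝ,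
    (∀ t ∈ Icc (0:ℝ) 1, 0 ≤ ∑ j : Fin (k+1), c j * t ^ (j:ℕ)) →
    ε * ‖c‖ ≤ ∑ j : Fin (k+1), c j * (1 / ((s:ℝ) + j + 1)) := by
  set L : (Fin (k+1) → ℝ) → ℝ := fun c => ∑ j : Fin (k+1), c j * (1 / ((s:ℝ) + j + 1))
    with hLdef
  have hL : Continuous L :=
    continuous_finset_sum _ fun j _ => (continuous_apply j).mul continuous_const
  set A : Set (Fin (k+1) → ℝ) :=
    {c | ∀ t ∈ Icc (0:ℝ) 1, 0 ≤ ∑ j : Fin (k+1), c j * t ^ (j:ℕ)} with hAdef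
  have hAc : IsClosed A := by
    have : A = ⋂ t ∈ Icc (0:ℝ) 1, {c : Fin (k+1) → ℝ | 0 ≤ ∑ j : Fin (k+1), c j * t ^ (j:ℕ)} := by
      ext c; simp [hAdef, Set.mem_iInter]
    rw [this]
    exact isClosed_biInter fun t _ => isClosed_le continuous_const
      (continuous_finset_sum _ fun j _ => (continuous_apply j).mul continuous_const)
  -- smul stability
  have hAsmul : ∀ (r : ℝ), 0 ≤ r → ∀ c ∈ A, r • c ∈ A := by
    intro r hr c hc t ht
    have := hc t ht
    simp only [Pi.smul_apply, smul_eq_mul]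
    calc (0:ℝ) ≤ r * ∑ j : Fin (k+1), c j * t ^ (j:ℕ) := mul_nonneg hr this
      _ = ∑ j : Fin (k+1), r * c j * t ^ (j:ℕ) := by rw [Finset.mul_sum]; exact Finset.sum_congr rfl fun j _ => by ring
  -- L is positively homogeneous
  have hLsmul : ∀ (r : ℝ) (c : Fin (k+1) → ℝ), L (r • c) = r * L c := by
    intro r c
    simp only [hLdef, Pi.smul_apply, smul_eq_mul, Finset.mul_sum]
    exact Finset.sum_congr rfl fun j _ => by ring
  -- positivity of L on A \ {0}
  have hLpos : ∀ c ∈ A, c ≠ 0 → 0 < L c := by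
    intro c hc hc0
    set p : Polynomial ℝ := ∑ j : Fin (k+1), Polynomial.C (c j) * Polynomial.X ^ (j:ℕ)
      with hpdef
    have hpe : ∀ t : ℝ, p.eval t = ∑ j : Fin (k+1), c j * t ^ (j:ℕ) := by
      intro t; simp [hpdef, Polynomial.eval_finset_sum]
    have hpcoeff : ∀ i : Fin (k+1), p.coeff (i:ℕ) = c i := by
      intro i
      rw [hpdef, Polynomial.finset_sum_coeff]
      rw [Finset.sum_eq_single i]
      · simp
      · intro j _ hji
        simp only [Polynomial.coeff_C_mul, Polynomial.coeff_X_pow]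
        rw [if_neg (fun h => hji (Fin.ext h.symm))]
        ring
      · simp
    have hp0 : p ≠ 0 := by
      intro h
      apply hc0
      funext i
      have := hpcoeff i
      rw [h] at this
      simpa using this.symm
    have := aux_int_pos s p hp0 (fun t ht => by rw [hpe]; exact hc t ht)
    show (0:ℝ) < ∑ j : Fin (k+1), c j * (1 / ((s:ℝ) + j + 1))
    rw [← aux_int_eval s k c]
    calc (0:ℝ) < ∫ t in (0:ℝ)..1, t ^ s * p.eval t := this
      _ = _ := by simp_rw [hpe]
  by_cases hKe : (A ∩ Metric.sphere 0 1).Nonempty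
  · have hK : IsCompact (A ∩ Metric.sphere 0 1) :=
      (isCompact_sphere (0 : Fin (k+1) → ℝ) 1).inter_left hAc
    obtain ⟨c₀, hc₀K, hmin⟩ := hK.exists_isMinOn hKe hL.continuousOn
    have hc₀0 : c₀ ≠ 0 := by
      intro h
      have := hc₀K.2
      rw [h] at this
      simp at this
    refine ⟨L c₀, hLpos c₀ hc₀K.1 hc₀0, ?_⟩
    intro c hc
    by_cases hc0 : c = 0
    · simp [hc0, hLdef]
    · have hn : (0:ℝ) < ‖c‖ := norm_pos_iff.2 hc0
      set d : Fin (k+1) → ℝ := ‖c‖⁻¹ • c with hddef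
      have hdK : d ∈ A ∩ Metric.sphere 0 1 := by
        refine ⟨hAsmul _ (by positivity) c hc, ?_⟩
        simp [hddef, norm_smul, abs_of_pos (inv_pos.2 hn), inv_mul_cancel₀ hn.ne']
      have h1 : L c₀ ≤ L d := hmin hdK
      have h2 : L d = ‖c‖⁻¹ * L c := hLsmul _ _
      rw [h2] at h1
      calc L c₀ * ‖c‖ ≤ (‖c‖⁻¹ * L c) * ‖c‖ := by
            exact mul_le_mul_of_nonneg_right h1 hn.le
        _ = L c := by field_simp
  · refine ⟨1, one_pos, ?_⟩
    intro c hc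
    have hc0 : c = 0 := by
      by_contra h
      have hn : (0:ℝ) < ‖c‖ := norm_pos_iff.2 h
      exact hKe ⟨‖c‖⁻¹ • c, hAsmul _ (by positivity) c hc,
        by simp [norm_smul, abs_of_pos (inv_pos.2 hn), inv_mul_cancel₀ hn.ne']⟩
    simp [hc0, hLdef]

lemma aux_key (k s : ℕ) : ∃ C : ℝ, 0 < C ∧ ∀ q : Polynomial ℝ, q.natDegree ≤ k →
    (∀ t ∈ Icc (0:ℝ) 1, 0 ≤ q.eval t) → ∀ x ∈ Icc (0:ℝ) 1,
    q.eval x ≤ C * ∫ t in (0:ℝ)..1, t ^ s * q.eval t := by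
  obtain ⟨ε, hε, hA⟩ := aux_stepA k s
  refine ⟨(k+1)/ε, by positivity, ?_⟩
  intro q hdeg hnn x hx
  set c : Fin (k+1) → ℝ := fun j => q.coeff j with hcdef
  have heval : ∀ t : ℝ, q.eval t = ∑ j : Fin (k+1), c j * t ^ (j:ℕ) := by
    intro t
    rw [Polynomial.eval_eq_sum_range' (Nat.lt_succ_of_le hdeg), Finset.sum_range]
  have hint : ∫ t in (0:ℝ)..1, t ^ s * q.eval t
      = ∑ j : Fin (k+1), c j * (1 / ((s:ℝ) + j + 1)) := by
    simp_rw [heval]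
    exact aux_int_eval s k c
  have hcA := hA c (fun t ht => by rw [← heval]; exact hnn t ht)
  rw [hint]
  have hb : q.eval x ≤ ((k:ℝ)+1) * ‖c‖ := by
    rw [heval]
    calc ∑ j : Fin (k+1), c j * x ^ (j:ℕ)
        ≤ ∑ j : Fin (k+1), ‖c‖ := by
          refine Finset.sum_le_sum fun j _ => ?_
          calc c j * x ^ (j:ℕ) ≤ |c j * x ^ (j:ℕ)| := le_abs_self _
            _ = |c j| * |x| ^ (j:ℕ) := by rw [abs_mul, abs_pow]
            _ ≤ ‖c‖ * 1 := by
                refine mul_le_mul (norm_le_pi_norm c j) ?_ (by positivity) (norm_nonneg c)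
                exact pow_le_one₀ (abs_nonneg x) (abs_le.2 ⟨by linarith [hx.1], hx.2⟩)
            _ = ‖c‖ := mul_one _
      _ = ((k:ℝ)+1) * ‖c‖ := by simp [Finset.sum_const, mul_comm]
  calc q.eval x ≤ ((k:ℝ)+1) * ‖c‖ := hb
    _ = ((k:ℝ)+1)/ε * (ε * ‖c‖) := by field_simp
    _ ≤ ((k:ℝ)+1)/ε * ∑ j : Fin (k+1), c j * (1 / ((s:ℝ) + j + 1)) := by
        exact mul_le_mul_of_nonneg_left hcA (by positivity)

/-- Accuracy of the moment-conserving limiter: there is a constant `C(k,s)` depending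
only on the degree `k` and moment index `s` such that for any cell `[a,b] ⊂ [0,∞)` and
any `n_h ∈ P^k` with nonnegative `s`-th moment, the limited polynomial
`ñ_h = θ(n_h + m)` satisfies `‖n_h − ñ_h‖_{L^∞} ≤ C(k,s)·m`, with `m = −min n_h > 0`. -/
theorem limiter_accuracy
    (k s : ℕ) (hs : s ≤ k) :
    ∃ C : ℝ, 0 < C ∧
      ∀ a b : ℝ, 0 ≤ a → a < b →
      ∀ P : Polynomial ℝ, P.natDegree ≤ k →
      ∀ m : ℝ, 0 < m →
      IsLeast ((fun v => P.eval v) '' Set.Icc a b) (-m) →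
      0 ≤ (∫ v in Set.Icc a b, v ^ s * P.eval v) →
      ∀ x ∈ Set.Icc a b,
        |P.eval x
            - (∫ v in Set.Icc a b, v ^ s * P.eval v)
                / ((∫ v in Set.Icc a b, v ^ s * P.eval v) + m * ∫ v in Set.Icc a b, v ^ s)
              * (P.eval x + m)| ≤ C * m := by
  obtain ⟨CK, hCK, hkey⟩ := aux_key k s
  refine ⟨CK + 1, by positivity, ?_⟩
  intro a b ha hab P hP m hm hleast hN x hx
  have hIcc : ∀ f : ℝ → ℝ, (∫ v in Set.Icc a b, f v) = ∫ v in a..b, f v := fun f => by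
    rw [MeasureTheory.integral_Icc_eq_integral_Ioc, intervalIntegral.integral_of_le hab.le]
  simp only [hIcc] at hN ⊢
  set Δ : ℝ := b - a with hΔdef
  have hΔ : 0 < Δ := sub_pos.2 hab
  set Q : Polynomial ℝ := P + Polynomial.C m with hQdef
  have hQeval : ∀ v : ℝ, Q.eval v = P.eval v + m := by intro v; simp [hQdef]
  have hQnn : ∀ v ∈ Set.Icc a b, 0 ≤ Q.eval v := by
    intro v hv
    have := hleast.2 ⟨v, hv, rfl⟩
    rw [hQeval]; linarith
  have hQdeg : Q.natDegree ≤ k := by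
    refine le_trans (Polynomial.natDegree_add_le _ _) ?_
    simp [hP]
  set q : Polynomial ℝ := Q.comp (Polynomial.C Δ * Polynomial.X + Polynomial.C a) with hqdef
  have hqeval : ∀ t : ℝ, q.eval t = Q.eval (Δ * t + a) := by
    intro t; simp [hqdef, Polynomial.eval_comp]
  have hqdeg : q.natDegree ≤ k := by
    refine le_trans (Polynomial.natDegree_comp_le) ?_
    have h1 : (Polynomial.C Δ * Polynomial.X + Polynomial.C a).natDegree ≤ 1 := by
      refine le_trans (Polynomial.natDegree_add_le _ _) ?_
      simp [Polynomial.natDegree_C_mul_le]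
      exact le_trans (Polynomial.natDegree_C_mul_le _ _) (by simp)
    calc Q.natDegree * (Polynomial.C Δ * Polynomial.X + Polynomial.C a).natDegree
        ≤ Q.natDegree * 1 := Nat.mul_le_mul_left _ h1
      _ = Q.natDegree := mul_one _
      _ ≤ k := hQdeg
  have hmem : ∀ t ∈ Set.Icc (0:ℝ) 1, Δ * t + a ∈ Set.Icc a b := by
    intro t ht
    constructor
    · nlinarith [ht.1]
    · nlinarith [ht.2]
  have hqnn : ∀ t ∈ Set.Icc (0:ℝ) 1, 0 ≤ q.eval t := by
    intro t ht; rw [hqeval]; exact hQnn _ (hmem t ht)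
  -- continuity facts
  have hc1 : Continuous fun v : ℝ => v ^ s * P.eval v := (continuous_pow s).mul P.continuous
  have hc2 : Continuous fun v : ℝ => v ^ s := continuous_pow s
  have hc3 : Continuous fun v : ℝ => v ^ s * Q.eval v := (continuous_pow s).mul Q.continuous
  have hc4 : Continuous fun t : ℝ => (Δ * t + a) ^ s * Q.eval (Δ * t + a) := by
    have : Continuous fun t : ℝ => Δ * t + a := by continuity
    exact ((this.pow s).mul (Q.continuous.comp this))
  have hc5 : Continuous fun t : ℝ => b ^ s * (t ^ s * q.eval t) :=
    continuous_const.mul ((continuous_pow s).mul q.continuous)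
  set N : ℝ := ∫ v in a..b, v ^ s * P.eval v with hNdef
  set W : ℝ := ∫ v in a..b, v ^ s with hWdef
  set J : ℝ := ∫ t in (0:ℝ)..1, t ^ s * q.eval t with hJdef
  have hWpos : 0 < W := by
    rw [hWdef, integral_pow]
    have : a ^ (s+1) < b ^ (s+1) := pow_lt_pow_left₀ hab ha (Nat.succ_ne_zero s)
    have hd : (0:ℝ) < (s:ℝ) + 1 := by positivity
    rw [div_pos_iff]
    left
    constructor
    · linarith
    · push_cast; linarith
  have hWle : W ≤ b ^ s * Δ := by
    rw [hWdef]
    calc ∫ v in a..b, v ^ s ≤ ∫ _v in a..b, b ^ s := by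
          refine intervalIntegral.integral_mono_on hab.le (hc2.intervalIntegrable _ _)
            (intervalIntegrable_const) ?_
          intro v hv
          exact pow_le_pow_left₀ (le_trans ha hv.1) hv.2 s
      _ = b ^ s * Δ := by rw [intervalIntegral.integral_const]; simp [hΔdef]; ring
  have hJnn : 0 ≤ J := by
    refine intervalIntegral.integral_nonneg (by norm_num) ?_
    intro t ht
    have := hqnn t ht
    have h0 : 0 ≤ t := ht.1
    positivity
  set D : ℝ := N + m * W with hDdef
  have hDpos : 0 < D := add_pos_of_nonneg_of_pos hN (mul_pos hm hWpos)
  -- D equals the integral of v^s * Q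
  have hDQ : (∫ v in a..b, v ^ s * Q.eval v) = D := by
    have : ∀ v : ℝ, v ^ s * Q.eval v = v ^ s * P.eval v + m * v ^ s := by
      intro v; rw [hQeval]; ring
    simp_rw [this]
    rw [intervalIntegral.integral_add (g := fun v : ℝ => m * v ^ s) (hc1.intervalIntegrable _ _)
      ((continuous_const.mul hc2).intervalIntegrable _ _),
      intervalIntegral.integral_const_mul]
  -- substitution
  have hsub : (∫ v in a..b, v ^ s * Q.eval v)
      = Δ * ∫ t in (0:ℝ)..1, (Δ * t + a) ^ s * Q.eval (Δ * t + a) := by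
    have h := intervalIntegral.smul_integral_comp_mul_add (a := (0:ℝ)) (b := 1)
      (fun v => v ^ s * Q.eval v) Δ a
    rw [mul_zero, zero_add, mul_one] at h
    have hb' : Δ + a = b := by rw [hΔdef]; ring
    rw [hb'] at h
    rw [← h]
    simp
  have hmono : Δ * (b ^ s * J) ≤ D := by
    rw [← hDQ, hsub]
    have hinner : (∫ t in (0:ℝ)..1, b ^ s * (t ^ s * q.eval t))
        ≤ ∫ t in (0:ℝ)..1, (Δ * t + a) ^ s * Q.eval (Δ * t + a) := by
      refine intervalIntegral.integral_mono_on (by norm_num)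
        (hc5.intervalIntegrable _ _) (hc4.intervalIntegrable _ _) ?_
      intro t ht
      rw [hqeval]
      have h1 : b * t ≤ Δ * t + a := by nlinarith [ht.1, ht.2]
      have h2 : (0:ℝ) ≤ b * t := mul_nonneg (by linarith) ht.1
      have h3 : (b * t) ^ s ≤ (Δ * t + a) ^ s := pow_le_pow_left₀ h2 h1 s
      have h4 : 0 ≤ Q.eval (Δ * t + a) := hQnn _ (hmem t ht)
      calc b ^ s * (t ^ s * Q.eval (Δ * t + a)) = (b * t) ^ s * Q.eval (Δ * t + a) := by
            rw [mul_pow]; ring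
        _ ≤ (Δ * t + a) ^ s * Q.eval (Δ * t + a) := mul_le_mul_of_nonneg_right h3 h4
    have hpull : (∫ t in (0:ℝ)..1, b ^ s * (t ^ s * q.eval t)) = b ^ s * J := by
      rw [hJdef, intervalIntegral.integral_const_mul]
    calc Δ * (b ^ s * J) = Δ * ∫ t in (0:ℝ)..1, b ^ s * (t ^ s * q.eval t) := by rw [hpull]
      _ ≤ Δ * ∫ t in (0:ℝ)..1, (Δ * t + a) ^ s * Q.eval (Δ * t + a) :=
          mul_le_mul_of_nonneg_left hinner hΔ.le
  -- key lemma applied at tx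
  set tx : ℝ := (x - a) / Δ with htxdef
  have htx : tx ∈ Set.Icc (0:ℝ) 1 := by
    constructor
    · apply div_nonneg _ hΔ.le; linarith [hx.1]
    · rw [div_le_one hΔ]; linarith [hx.2]
  have htxval : Δ * tx + a = x := by rw [htxdef]; field_simp; ring
  have hQx : Q.eval x = q.eval tx := by rw [hqeval, htxval]
  have hQxnn : 0 ≤ Q.eval x := hQnn x hx
  have hkx : Q.eval x ≤ CK * J := by
    rw [hQx, hJdef]
    exact hkey q hqdeg hqnn tx htx
  -- final algebra
  have hE : P.eval x - N / D * (P.eval x + m) = m * W / D * Q.eval x - m := by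
    rw [hQeval]
    field_simp
    ring
  rw [hE]
  have hu : m * W / D * Q.eval x ≤ CK * m := by
    have step1 : m * W / D * Q.eval x ≤ m * (b ^ s * Δ) / D * (CK * J) := by
      refine mul_le_mul ?_ hkx hQxnn (div_nonneg (mul_nonneg hm.le (mul_nonneg (pow_nonneg (by linarith : (0:ℝ) ≤ b) s) hΔ.le)) hDpos.le)
      gcongr
    have step2 : m * (b ^ s * Δ) / D * (CK * J) = CK * m * (Δ * (b ^ s * J) / D) := by
      ring
    have step3 : Δ * (b ^ s * J) / D ≤ 1 := (div_le_one hDpos).2 hmono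
    calc m * W / D * Q.eval x ≤ m * (b ^ s * Δ) / D * (CK * J) := step1
      _ = CK * m * (Δ * (b ^ s * J) / D) := step2
      _ ≤ CK * m * 1 := mul_le_mul_of_nonneg_left step3 (by positivity)
      _ = CK * m := mul_one _
  have hl : 0 ≤ m * W / D * Q.eval x :=
    mul_nonneg (div_nonneg (mul_nonneg hm.le hWpos.le) hDpos.le) hQxnn
  rw [abs_le]
  constructor
  · nlinarith
  · nlinarith
end
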